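/- arXiv:0804.4005 — 2 statements merged into one kernel-verified Lean document; each statement's English description precedes it below -/
import Mathlib

section
/- Let N ≥ 1, let R > 1 and γ > 0 be real numbers, and let H be an N×N positive definite Hermitian complex matrix all of whose eigenvalues λ satisfy γ/R ≤ λ ≤ γR. Then every eigenvalue μ of H satisfies R^{-2} ≤ (det H)^{-1/N} · μ ≤ R^{2}, where det H denotes the (real, positive) determinant of H and (det H)^{-1/N} is its real (-1/N)-th power. -/
open Matrix
open scoped ComplexOrder

/-- If all eigenvalues of a positive definite Hermitian `N × N` matrix `H`
lie in `[γ/R, γR]` with `γ > 0`, `R > 1`, then every eigenvalue `μ` of `H` satisfies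
`R⁻² ≤ (det H)^(-1/N) · μ ≤ R²`. -/
theorem det_normalized_eigenvalue_bounds
    {N : ℕ} (hN : 1 ≤ N) {R γ : ℝ} (hR : 1 < R) (hγ : 0 < γ)
    (H : Matrix (Fin N) (Fin N) ℂ) (hH : H.PosDef)
    (hbd : ∀ i, γ / R ≤ hH.1.eigenvalues i ∧ hH.1.eigenvalues i ≤ γ * R) :
    ∀ i, (R ^ 2)⁻¹ ≤ H.det.re ^ (-(1 : ℝ) / N) * hH.1.eigenvalues i ∧
      H.det.re ^ (-(1 : ℝ) / N) * hH.1.eigenvalues i ≤ R ^ 2 := by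
  intro i
  have hR0 : (0:ℝ) < R := lt_trans one_pos hR
  have hlo : (0:ℝ) < γ / R := div_pos hγ hR0
  have hhi : (0:ℝ) < γ * R := mul_pos hγ hR0
  have hdet : H.det.re = ∏ j, hH.1.eigenvalues j := by
    have := hH.1.det_eq_prod_eigenvalues
    rw [this]
    norm_cast
  have hprod_lo : (γ / R) ^ N ≤ H.det.re := by
    have e : (γ / R) ^ N = ∏ _j : Fin N, (γ / R) := by simp; ring
    rw [hdet, e]
    exact Finset.prod_le_prod (fun j _ => le_of_lt hlo) (fun j _ => (hbd j).1)
  have hprod_hi : H.det.re ≤ (γ * R) ^ N := by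
    have e : (γ * R) ^ N = ∏ _j : Fin N, (γ * R) := by simp
    rw [hdet, e]
    exact Finset.prod_le_prod (fun j _ => (hH.eigenvalues_pos j).le) (fun j _ => (hbd j).2)
  have hdpos : (0:ℝ) < H.det.re := lt_of_lt_of_le (pow_pos hlo N) hprod_lo
  have hNpos : (0:ℝ) < N := by exact_mod_cast hN
  have hexp : -(1:ℝ)/N < 0 := div_neg_of_neg_of_pos (by norm_num) hNpos
  -- rpow bounds
  have h1 : H.det.re ^ ((-(1:ℝ))/N) ≤ ((γ / R) ^ N) ^ ((-(1:ℝ))/N) :=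
    Real.rpow_le_rpow_of_nonpos (pow_pos hlo N) hprod_lo (le_of_lt hexp)
  have h2 : ((γ * R) ^ N) ^ ((-(1:ℝ))/N) ≤ H.det.re ^ ((-(1:ℝ))/N) :=
    Real.rpow_le_rpow_of_nonpos hdpos hprod_hi (le_of_lt hexp)
  have hexp' : (N:ℝ) * (-(1:ℝ)/N) = -1 := by field_simp
  have e1 : ((γ / R) ^ N) ^ ((-(1:ℝ))/N) = (γ / R)⁻¹ := by
    rw [← Real.rpow_natCast (γ/R) N, ← Real.rpow_mul hlo.le, hexp', Real.rpow_neg_one]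
  have e2 : ((γ * R) ^ N) ^ ((-(1:ℝ))/N) = (γ * R)⁻¹ := by
    rw [← Real.rpow_natCast (γ*R) N, ← Real.rpow_mul hhi.le, hexp', Real.rpow_neg_one]
  rw [e1] at h1; rw [e2] at h2
  have hμlo := (hbd i).1
  have hμhi := (hbd i).2
  have hrp : (0:ℝ) < H.det.re ^ ((-(1:ℝ))/N) := Real.rpow_pos_of_pos hdpos _
  constructor
  · calc (R ^ 2)⁻¹ = (γ * R)⁻¹ * (γ / R) := by field_simp
    _ ≤ H.det.re ^ ((-(1:ℝ))/N) * hH.1.eigenvalues i :=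
        mul_le_mul h2 hμlo hlo.le hrp.le
  · calc H.det.re ^ ((-(1:ℝ))/N) * hH.1.eigenvalues i
        ≤ (γ / R)⁻¹ * (γ * R) :=
          mul_le_mul h1 hμhi (hH.eigenvalues_pos i).le (by positivity)
    _ = R ^ 2 := by field_simp
end

section
/- Let N ≥ 1 and for each l ∈ ℕ let A_l(1), …, A_l(N) be nonnegative real numbers such that Σ_{i=1}^{N} A_l(i) = N for every l, and such that Π_{i=1}^{N} A_l(i) → 1 as l → ∞. Then for every i ∈ {1, …, N}, A_l(i) → 1 as l → ∞. -/
open Filter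

/-- AM–GM equality case: nonnegative reals summing to `N` with product `1` are all `1`. -/
lemma all_eq_one_of_sum_eq_card_of_prod_eq_one {N : ℕ} {B : Fin N → ℝ}
    (h0 : ∀ i, 0 ≤ B i) (hs : ∑ i, B i = N) (hp : ∏ i, B i = 1) : ∀ i, B i = 1 := by
  have hpos : ∀ i, 0 < B i := by
    intro i
    rcases (h0 i).lt_or_eq with h | h
    · exact h
    · exfalso
      have : ∏ j, B j = 0 := Finset.prod_eq_zero (Finset.mem_univ i) h.symm
      simp [this] at hp
  by_contra hne
  push_neg at hne
  obtain ⟨j, hj⟩ := hne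
  have hle : ∀ i, B i ≤ Real.exp (B i - 1) := by
    intro i
    have := Real.add_one_le_exp (B i - 1)
    linarith
  have hlt : B j < Real.exp (B j - 1) := by
    have := Real.add_one_lt_exp (x := B j - 1) (by intro h; apply hj; linarith [sub_eq_zero.mp h])
    linarith
  have key : ∏ i, B i < ∏ i, Real.exp (B i - 1) :=
    Finset.prod_lt_prod (fun i _ => hpos i) (fun i _ => hle i)
      ⟨j, Finset.mem_univ j, hlt⟩
  rw [← Real.exp_sum] at key
  have hsum0 : ∑ i, (B i - 1) = 0 := by
    rw [Finset.sum_sub_distrib, hs]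
    simp
  rw [hsum0, Real.exp_zero, hp] at key
  exact lt_irrefl 1 key

/-- If for each `l` the nonnegative reals `A l 1, …, A l N` sum to `N`, and
their products tend to `1` as `l → ∞`, then each `A l i → 1` as `l → ∞`. -/
theorem tendsto_one_of_sum_eq_card_of_prod_tendsto_one
    {N : ℕ} (hN : 1 ≤ N) (A : ℕ → Fin N → ℝ)
    (hnonneg : ∀ l i, 0 ≤ A l i)
    (hsum : ∀ l, ∑ i, A l i = N)
    (hprod : Tendsto (fun l => ∏ i, A l i) atTop (nhds 1)) :
    ∀ i, Tendsto (fun l => A l i) atTop (nhds 1) := by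
  intro i
  apply tendsto_of_subseq_tendsto
  intro ns hns
  -- the sequence lives in the compact box [0, N]^N
  have hcompact : IsCompact (Set.pi Set.univ fun _ : Fin N => Set.Icc (0 : ℝ) N) :=
    isCompact_univ_pi fun _ => isCompact_Icc
  have hmem : ∀ n, A (ns n) ∈ Set.pi Set.univ fun _ : Fin N => Set.Icc (0 : ℝ) N := by
    intro n
    intro k _
    refine ⟨hnonneg _ _, ?_⟩
    calc A (ns n) k ≤ ∑ j, A (ns n) j :=
          Finset.single_le_sum (f := fun j => A (ns n) j) (fun j _ => hnonneg _ _) (Finset.mem_univ k)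
      _ = N := hsum _
  obtain ⟨B, hB, φ, hφ, hconv⟩ := hcompact.tendsto_subseq hmem
  have hcoord : ∀ k, Tendsto (fun n => A (ns (φ n)) k) atTop (nhds (B k)) := by
    intro k
    exact (tendsto_pi_nhds.mp hconv) k
  -- the limit has sum N
  have hsumB : ∑ k, B k = N := by
    have h1 : Tendsto (fun n => ∑ k, A (ns (φ n)) k) atTop (nhds (∑ k, B k)) :=
      tendsto_finset_sum _ fun k _ => hcoord k
    have h2 : Tendsto (fun n => ∑ k, A (ns (φ n)) k) atTop (nhds (N : ℝ)) := by
      simp only [hsum]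
      exact tendsto_const_nhds
    exact tendsto_nhds_unique h1 h2
  -- the limit has product 1
  have hprodB : ∏ k, B k = 1 := by
    have h1 : Tendsto (fun n => ∏ k, A (ns (φ n)) k) atTop (nhds (∏ k, B k)) :=
      tendsto_finset_prod _ fun k _ => hcoord k
    have h2 : Tendsto (fun n => ∏ k, A (ns (φ n)) k) atTop (nhds 1) :=
      hprod.comp (hns.comp hφ.tendsto_atTop)
    exact tendsto_nhds_unique h1 h2
  have hBnonneg : ∀ k, 0 ≤ B k := fun k => (hB k (Set.mem_univ k)).1
  have hBone := all_eq_one_of_sum_eq_card_of_prod_eq_one hBnonneg hsumB hprodB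
  exact ⟨φ, (hBone i) ▸ hcoord i⟩
end
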